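/- Let T, B ∈ L(H) satisfy T B T = T. Let P ∈ L(H) be a self-adjoint idempotent with R(P) = R(I − BT), and let Q ∈ L(H) be a self-adjoint idempotent with R(Q) = R(TB). Then (I − P) B Q is the Moore–Penrose inverse of T; that is, with C = (I − P) B Q one has T C T = T, C T C = C, (TC)* = TC, and (CT)* = CT. -/

import Mathlib

open ContinuousLinearMap

/-- Let `T, B ∈ L(H)` with `T B T = T`. Let `P` be the orthogonal projection onto
`R(I − BT)` and `Q` the orthogonal projection onto `R(TB)`. Then `(I − P) B Q` is the
Moore–Penrose inverse of `T`. -/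
theorem moore_penrose_of_inner_inverse
    {H : Type*} [NormedAddCommGroup H] [InnerProductSpace ℂ H] [CompleteSpace H]
    (T B P Q : H →L[ℂ] H)
    (hTBT : T ∘L B ∘L T = T)
    (hP1 : P ∘L P = P) (hP2 : ContinuousLinearMap.adjoint P = P)
    (hP3 : Set.range P = Set.range ((1 : H →L[ℂ] H) - B ∘L T))
    (hQ1 : Q ∘L Q = Q) (hQ2 : ContinuousLinearMap.adjoint Q = Q)
    (hQ3 : Set.range Q = Set.range (T ∘L B)) :
    T ∘L ((1 - P) ∘L B ∘L Q) ∘L T = T ∧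
      ((1 - P) ∘L B ∘L Q) ∘L T ∘L ((1 - P) ∘L B ∘L Q) = (1 - P) ∘L B ∘L Q ∧
      ContinuousLinearMap.adjoint (T ∘L ((1 - P) ∘L B ∘L Q)) = T ∘L ((1 - P) ∘L B ∘L Q) ∧
      ContinuousLinearMap.adjoint (((1 - P) ∘L B ∘L Q) ∘L T) = ((1 - P) ∘L B ∘L Q) ∘L T := by
  -- pointwise versions
  have pTBT : ∀ x, T (B (T x)) = T x := fun x => congrFun (congrArg DFunLike.coe hTBT) x
  have pP1 : ∀ x, P (P x) = P x := fun x => congrFun (congrArg DFunLike.coe hP1) x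
  have pQ1 : ∀ x, Q (Q x) = Q x := fun x => congrFun (congrArg DFunLike.coe hQ1) x
  -- Q is the identity on range Q = range (T ∘L B); T x ∈ range (T ∘L B)
  have pQT : ∀ x, Q (T x) = T x := by
    intro x
    have hmem : T x ∈ Set.range Q := by
      rw [hQ3]; exact ⟨T x, pTBT x⟩
    obtain ⟨y, hy⟩ := hmem
    rw [← hy, pQ1]
  -- T vanishes on range P = range (1 - BT)
  have pTP : ∀ x, T (P x) = 0 := by
    intro x
    have hmem : P x ∈ Set.range ((1 : H →L[ℂ] H) - B ∘L T) := by
      rw [← hP3]; exact ⟨x, rfl⟩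
    obtain ⟨y, hy⟩ := hmem
    have : P x = y - B (T y) := by simpa using hy.symm
    rw [this, map_sub, pTBT, sub_self]
  -- T B Q = Q
  have pTBQ : ∀ x, T (B (Q x)) = Q x := by
    intro x
    have hmem : Q x ∈ Set.range (T ∘L B) := by
      rw [← hQ3]; exact ⟨x, rfl⟩
    obtain ⟨y, hy⟩ := hmem
    have hy' : Q x = T (B y) := hy.symm
    rw [hy', pTBT]
  -- P (1 - BT) = 1 - BT, i.e. (1-P) B T x = x - P x
  have pPBT : ∀ x, B (T x) - P (B (T x)) = x - P x := by
    intro x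
    have hmem : x - B (T x) ∈ Set.range P := by
      rw [hP3]; exact ⟨x, by simp⟩
    obtain ⟨y, hy⟩ := hmem
    have h1 : P (x - B (T x)) = x - B (T x) := by rw [← hy, pP1]
    have h2 : P x - P (B (T x)) = x - B (T x) := by rw [← map_sub]; exact h1
    rw [← sub_eq_zero] at h2 ⊢
    abel_nf at h2 ⊢
    exact h2
  refine ⟨?_, ?_, ?_, ?_⟩
  · ext x
    simp only [comp_apply, sub_apply, one_apply, map_sub, coe_comp']
    simp [pQT, pTP, pTBT]
  · ext x
    simp only [comp_apply, sub_apply, one_apply, map_sub, coe_comp']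
    simp [pQT, pTP, pTBQ, pQ1]
  · have hTC : T ∘L ((1 - P) ∘L B ∘L Q) = Q := by
      ext x
      simp only [comp_apply, sub_apply, one_apply, map_sub]
      change T (B (Q x)) - T (P (B (Q x))) = Q x; rw [pTBQ]
      have := pTP (B (Q x))
      rw [this, sub_zero]
    rw [hTC, hQ2]
  · have hCT : ((1 - P) ∘L B ∘L Q) ∘L T = 1 - P := by
      ext x
      simp only [comp_apply, sub_apply, one_apply]
      rw [pQT]
      exact pPBT x
    rw [hCT, map_sub, hP2]
    congr 1
    exact ContinuousLinearMap.adjoint_one
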